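/- Let (Ω, F, P) be a probability space and Z an integrable real random variable (representing X − τ, the payoff minus the target). Then sSup{ 1 − α : α ∈ (0, 1] and there exists η < 0 with η + (1/α)·E[(Z − η)₊] ≤ 0 } = sSup{ E[min(−a·Z, 1)] : a ∈ (0, ∞) }, where sSup denotes the real supremum (with the convention that the supremum of the empty set is 0, as for Lean's sSup on ℝ). In other words, the CVaR-constrained satisficing optimization problem max{1 − α : α ∈ (0,1], CVaR-type constraint inf_{η<0}(η + (1/α)E[(Z−η)₊]) ≤ 0} has the same optimal value as the unconstrained concave maximization sup_{a>0} E[min(−aZ, 1)]. -/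

import Mathlib

open MeasureTheory Set

lemma aux_key {Ω : Type*} [MeasurableSpace Ω] (P : Measure Ω) [IsProbabilityMeasure P]
    (Z : Ω → ℝ) (hZ : Integrable Z P) {a : ℝ} (ha : 0 < a) :
    ∫ ω, min (-(a * Z ω)) 1 ∂P = 1 - a * ∫ ω, max (Z ω - (-(1/a))) 0 ∂P := by
  have hinv : a * (1 / a) = 1 := by field_simp
  have hint : Integrable (fun ω => max (Z ω - (-(1/a))) 0) P :=
    (hZ.sub (integrable_const _)).pos_part
  have hpt : ∀ ω, min (-(a * Z ω)) 1 = 1 - a * max (Z ω - (-(1/a))) 0 := by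
    intro ω
    rcases le_total (Z ω - (-(1/a))) 0 with h | h
    · rw [max_eq_right h, min_eq_right]
      · ring
      · nlinarith [mul_le_mul_of_nonneg_left h ha.le]
    · rw [max_eq_left h, min_eq_left]
      · nlinarith
      · nlinarith [mul_le_mul_of_nonneg_left h ha.le]
  calc ∫ ω, min (-(a * Z ω)) 1 ∂P
      = ∫ ω, (1 - a * max (Z ω - (-(1/a))) 0) ∂P := by
        refine integral_congr_ae (Filter.Eventually.of_forall hpt)
    _ = (∫ _, (1:ℝ) ∂P) - ∫ ω, a * max (Z ω - (-(1/a))) 0 ∂P :=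
        integral_sub (integrable_const 1) (hint.const_mul a)
    _ = 1 - a * ∫ ω, max (Z ω - (-(1/a))) 0 ∂P := by
        rw [integral_const_mul, integral_const]
        simp

/-- Theorem 5.4: the CVaR-constrained satisficing problem
`max {1 − α : α ∈ (0,1], ∃ η < 0, η + (1/α)·E[(Z − η)₊] ≤ 0}` has the same optimal value as
the unconstrained concave problem `sup_{a > 0} E[min(−a·Z, 1)]`. -/
theorem stmt_2 {Ω : Type*} [MeasurableSpace Ω] (P : Measure Ω) [IsProbabilityMeasure P]
    (Z : Ω → ℝ) (hZ : Integrable Z P) :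
    sSup {x : ℝ | ∃ α ∈ Ioc (0 : ℝ) 1,
        (∃ η : ℝ, η < 0 ∧ η + (1 / α) * ∫ ω, max (Z ω - η) 0 ∂P ≤ 0) ∧ x = 1 - α} =
    sSup {x : ℝ | ∃ a : ℝ, 0 < a ∧ x = ∫ ω, min (-(a * Z ω)) 1 ∂P} := by
  set A := {x : ℝ | ∃ α ∈ Ioc (0 : ℝ) 1,
      (∃ η : ℝ, η < 0 ∧ η + (1 / α) * ∫ ω, max (Z ω - η) 0 ∂P ≤ 0) ∧ x = 1 - α} with hAdef
  set B := {x : ℝ | ∃ a : ℝ, 0 < a ∧ x = ∫ ω, min (-(a * Z ω)) 1 ∂P} with hBdef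
  have hMnn : ∀ η : ℝ, 0 ≤ ∫ ω, max (Z ω - η) 0 ∂P := fun η =>
    integral_nonneg (fun ω => le_max_right _ _)
  -- bounds
  have hbddB : BddAbove B := by
    refine ⟨1, fun y hy => ?_⟩
    obtain ⟨a, ha, rfl⟩ := hy
    rw [aux_key P Z hZ ha]
    nlinarith [hMnn (-(1/a))]
  have hA0 : ∀ x ∈ A, (0:ℝ) ≤ x := by
    rintro x ⟨α, ⟨hα0, hα1⟩, _, rfl⟩; linarith
  have hbddA : BddAbove A := by
    refine ⟨1, fun x hx => ?_⟩
    obtain ⟨α, ⟨hα0, hα1⟩, _, rfl⟩ := hx; linarith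
  -- 0 ≤ sSup B
  have hBnonneg : (0:ℝ) ≤ sSup B := by
    refine le_of_forall_pos_le_add (fun ε hε => ?_)
    set I := ∫ ω, |Z ω| ∂P with hIdef
    have hInn : 0 ≤ I := integral_nonneg (fun ω => abs_nonneg _)
    set a := ε / (I + 1) with hadef
    have ha : 0 < a := div_pos hε (by linarith)
    have hinv : a * (1 / a) = 1 := by field_simp
    -- a * ∫ max(Z + 1/a, 0) ≤ a * I + 1
    have hint : Integrable (fun ω => max (Z ω - (-(1/a))) 0) P :=
      (hZ.sub (integrable_const _)).pos_part
    have hmono : ∫ ω, a * max (Z ω - (-(1/a))) 0 ∂P ≤ ∫ ω, (a * |Z ω| + 1) ∂P := by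
      refine integral_mono (hint.const_mul a) ((hZ.abs.const_mul a).add (integrable_const 1)) ?_
      intro ω
      dsimp only
      rcases le_total (Z ω - (-(1/a))) 0 with h | h
      · rw [max_eq_right h]
        nlinarith [abs_nonneg (Z ω)]
      · rw [max_eq_left h]
        nlinarith [le_abs_self (Z ω), abs_nonneg (Z ω)]
    have h2 : a * ∫ ω, max (Z ω - (-(1/a))) 0 ∂P ≤ a * I + 1 := by
      calc a * ∫ ω, max (Z ω - (-(1/a))) 0 ∂P
          = ∫ ω, a * max (Z ω - (-(1/a))) 0 ∂P := (integral_const_mul a _).symm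
        _ ≤ ∫ ω, (a * |Z ω| + 1) ∂P := hmono
        _ = (∫ ω, a * |Z ω| ∂P) + ∫ _, (1:ℝ) ∂P :=
            integral_add (hZ.abs.const_mul a) (integrable_const 1)
        _ = a * I + 1 := by rw [integral_const_mul, integral_const]; simp [hIdef]
    have hmem : (∫ ω, min (-(a * Z ω)) 1 ∂P) ∈ B := ⟨a, ha, rfl⟩
    have hle : -(a * I) ≤ ∫ ω, min (-(a * Z ω)) 1 ∂P := by
      rw [aux_key P Z hZ ha]; linarith
    have haI : a * I ≤ ε := by
      rw [hadef, div_mul_eq_mul_div, div_le_iff₀ (by linarith : (0:ℝ) < I + 1)]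
      nlinarith
    linarith [le_csSup hbddB hmem]
  apply le_antisymm
  · -- sSup A ≤ sSup B
    rcases eq_empty_or_nonempty A with hA | hA
    · rw [hA, Real.sSup_empty]; exact hBnonneg
    · refine csSup_le hA ?_
      rintro x ⟨α, ⟨hα0, hα1⟩, ⟨η, hη, hcon⟩, rfl⟩
      set a := -η⁻¹ with hadef
      have ha : 0 < a := neg_pos.mpr (inv_neg''.mpr hη)
      have hηa : -(1/a) = η := by
        rw [hadef]; field_simp
      have hmem : (∫ ω, min (-(a * Z ω)) 1 ∂P) ∈ B := ⟨a, ha, rfl⟩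
      have hval : ∫ ω, min (-(a * Z ω)) 1 ∂P = 1 - a * ∫ ω, max (Z ω - η) 0 ∂P := by
        rw [aux_key P Z hZ ha, hηa]
      -- from constraint : a * M ≤ α
      set M := ∫ ω, max (Z ω - η) 0 ∂P with hMdef
      have hM : 0 ≤ M := hMnn η
      have hiα : α * (1 / α) = 1 := by field_simp
      have hiη : η * η⁻¹ = 1 := mul_inv_cancel₀ (ne_of_lt hη)
      have haM : a * M ≤ α := by
        -- hcon : η + (1/α) * M ≤ 0 ; so (1/α) * M ≤ -η ; so M ≤ -η*α ; so a*M ≤ α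
        have h1 : M ≤ -η * α := by nlinarith
        rw [hadef]
        nlinarith [mul_le_mul_of_nonneg_left h1 (neg_pos.mpr (inv_neg''.mpr hη)).le]
      have : 1 - α ≤ ∫ ω, min (-(a * Z ω)) 1 ∂P := by rw [hval]; linarith
      exact this.trans (le_csSup hbddB hmem)
  · -- sSup B ≤ sSup A
    have hBne : B.Nonempty := ⟨_, 1, one_pos, rfl⟩
    refine csSup_le hBne ?_
    rintro y ⟨a, ha, rfl⟩
    rw [aux_key P Z hZ ha]
    set M := ∫ ω, max (Z ω - (-(1/a))) 0 ∂P with hMdef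
    have hM : 0 ≤ M := hMnn _
    rcases le_or_gt (a * M) 1 with hcase | hcase
    · refine le_of_forall_pos_le_add (fun ε hε => ?_)
      set α := max (a * M) (min ε 1) with hαdef
      have hα0 : 0 < α := lt_of_lt_of_le (lt_min hε one_pos) (le_max_right _ _)
      have hα1 : α ≤ 1 := max_le hcase (min_le_right _ _)
      have hαM : a * M ≤ α := le_max_left _ _
      have hcon : -(1/a) + (1 / α) * M ≤ 0 := by
        have h1 : M / α ≤ 1 / a := by
          rw [div_le_div_iff₀ hα0 ha]
          linarith [mul_comm a M]
        rw [one_div_mul_eq_div]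
        linarith
      have hmem : (1 - α) ∈ A :=
        ⟨α, ⟨hα0, hα1⟩, ⟨-(1/a), neg_lt_zero.mpr (by positivity), hcon⟩, rfl⟩
      have hαle : α ≤ a * M + ε :=
        max_le (by linarith) (le_trans (min_le_left _ _) (by nlinarith))
      linarith [le_csSup hbddA hmem]
    · have : (0:ℝ) ≤ sSup A := Real.sSup_nonneg hA0
      linarith
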